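/- Let C be a nonempty closed convex subset of a real Hilbert space H, A : C → H an α-inverse strongly monotone mapping (α > 0), T : C → C nonexpansive with F = F(T) ∩ Ω ≠ ∅, {λ_n} ⊂ [a, b] ⊂ (0, 2α), {α_n} ⊂ [c, d] ⊂ (0, 1), and let {x_n}, {y_n} be generated from x₀ ∈ C by t_n = P_C(x_n − λ_n A x_n), y_n = α_n x_n + (1 − α_n) T t_n, x_{n+1} = T P_C(y_n − λ_n A y_n). Then lim_{n→∞} ‖x_n − T t_n‖ = 0 and lim_{n→∞} ‖x_n − y_n‖ = 0. -/

import Mathlib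

open scoped RealInnerProductSpace
open Filter Topology

private lemma convex_norm_sq_identity {H : Type*} [NormedAddCommGroup H]
    [InnerProductSpace ℝ H] (s : ℝ) (u v : H) :
    ‖s • u + (1 - s) • v‖ ^ 2
      = s * ‖u‖ ^ 2 + (1 - s) * ‖v‖ ^ 2 - s * (1 - s) * ‖u - v‖ ^ 2 := by
  rw [← real_inner_self_eq_norm_sq, ← real_inner_self_eq_norm_sq,
    ← real_inner_self_eq_norm_sq, ← real_inner_self_eq_norm_sq]
  simp only [inner_add_left, inner_add_right, inner_sub_left, inner_sub_right,
    real_inner_smul_left, real_inner_smul_right]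
  rw [real_inner_comm v u]
  ring

theorem stmt_13
    {H : Type*} [NormedAddCommGroup H] [InnerProductSpace ℝ H] [CompleteSpace H]
    (C : Set H) (hCne : C.Nonempty) (hCcl : IsClosed C) (hCcv : Convex ℝ C)
    (PC : H → H) (hPC : ∀ u : H, PC u ∈ C ∧ ∀ w ∈ C, ‖u - PC u‖ ≤ ‖u - w‖)
    (α : ℝ) (hα : 0 < α) (A : H → H)
    (hA : ∀ x ∈ C, ∀ y ∈ C, ⟪A x - A y, x - y⟫ ≥ α * ‖A x - A y‖ ^ 2)
    (T : H → H) (hTmaps : Set.MapsTo T C C)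
    (hT : ∀ x ∈ C, ∀ y ∈ C, ‖T x - T y‖ ≤ ‖x - y‖)
    (F : Set H)
    (hF : F = {x ∈ C | T x = x} ∩ {x ∈ C | ∀ y ∈ C, ⟪A x, y - x⟫ ≥ 0})
    (hFne : F.Nonempty)
    (a b c d : ℝ) (ha : 0 < a) (hab : a ≤ b) (hb : b < 2 * α)
    (hc : 0 < c) (hcd : c ≤ d) (hd : d < 1)
    (lam : ℕ → ℝ) (hlam : ∀ n, lam n ∈ Set.Icc a b)
    (alp : ℕ → ℝ) (halp : ∀ n, alp n ∈ Set.Icc c d)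
    (x y t : ℕ → H) (hx0 : x 0 ∈ C)
    (ht : ∀ n, t n = PC (x n - lam n • A (x n)))
    (hy : ∀ n, y n = alp n • x n + (1 - alp n) • T (t n))
    (hx : ∀ n, x (n + 1) = T (PC (y n - lam n • A (y n)))) :
    Tendsto (fun n => ‖x n - T (t n)‖) atTop (𝓝 0) ∧
    Tendsto (fun n => ‖x n - y n‖) atTop (𝓝 0) := by
  obtain ⟨p, hpF⟩ := hFne
  rw [hF] at hpF
  obtain ⟨⟨hpC, hTp⟩, _, hVI⟩ := hpF
  -- variational characterization of the projection
  have hvar : ∀ u : H, ∀ w ∈ C, ⟪u - PC u, w - PC u⟫ ≤ 0 := by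
    intro u w hw
    have h1 : ‖u - PC u‖ = ⨅ w : C, ‖u - (w : H)‖ := by
      haveI : Nonempty C := ⟨⟨PC u, (hPC u).1⟩⟩
      apply le_antisymm
      · exact le_ciInf fun w => (hPC u).2 w w.2
      · have hbd : BddBelow (Set.range fun w : C => ‖u - (w : H)‖) :=
          ⟨0, by rintro r ⟨w, rfl⟩; exact norm_nonneg _⟩
        exact ciInf_le hbd ⟨PC u, (hPC u).1⟩
    exact (norm_eq_iInf_iff_real_inner_le_zero hCcv (hPC u).1).mp h1 w hw
  -- PC is nonexpansive
  have hPCne : ∀ u v : H, ‖PC u - PC v‖ ≤ ‖u - v‖ := by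
    intro u v
    have h1 := hvar u (PC v) (hPC v).1
    have h2 := hvar v (PC u) (hPC u).1
    have e : ⟪u - v, PC u - PC v⟫
        = -⟪u - PC u, PC v - PC u⟫ - ⟪v - PC v, PC u - PC v⟫ + ‖PC u - PC v‖ ^ 2 := by
      rw [← real_inner_self_eq_norm_sq]
      simp only [inner_sub_left, inner_sub_right]
      ring
    have key : ‖PC u - PC v‖ ^ 2 ≤ ⟪u - v, PC u - PC v⟫ := by
      rw [e]; linarith
    have hcs := real_inner_le_norm (u - v) (PC u - PC v)
    nlinarith [norm_nonneg (PC u - PC v), norm_nonneg (u - v)]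
  -- p is a fixed point of PC ∘ (I - l A) for l ≥ 0
  have hpfix : ∀ l : ℝ, 0 ≤ l → PC (p - l • A p) = p := by
    intro l hl
    set u := p - l • A p with hu
    have h1 : ⟪u - PC u, p - PC u⟫ ≤ 0 := hvar u p hpC
    have h2 : ⟪p - u, p - PC u⟫ ≤ 0 := by
      have hpu : p - u = l • A p := by simp [hu]
      rw [hpu, real_inner_smul_left]
      have hAp : ⟪A p, PC u - p⟫ ≥ 0 := hVI (PC u) (hPC u).1
      have : ⟪A p, p - PC u⟫ = -⟪A p, PC u - p⟫ := by
        rw [← inner_neg_right]; congr 1; abel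
      rw [this]
      exact mul_nonpos_of_nonneg_of_nonpos hl (by linarith)
    have e : ⟪u - PC u, p - PC u⟫ + ⟪p - u, p - PC u⟫ = ‖p - PC u‖ ^ 2 := by
      rw [← inner_add_left, ← real_inner_self_eq_norm_sq]
      congr 1; abel
    have hz : ‖p - PC u‖ ^ 2 ≤ 0 := by linarith
    have : ‖p - PC u‖ = 0 := by nlinarith [norm_nonneg (p - PC u)]
    have : p - PC u = 0 := by rwa [norm_eq_zero] at this
    have := sub_eq_zero.mp this
    exact this.symm
  -- I - l A is nonexpansive on C for l ∈ [0, 2α]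
  have hIA : ∀ l : ℝ, 0 ≤ l → l ≤ 2 * α → ∀ u ∈ C, ∀ v ∈ C,
      ‖(u - l • A u) - (v - l • A v)‖ ≤ ‖u - v‖ := by
    intro l hl0 hl2 u hu v hv
    have hre : (u - l • A u) - (v - l • A v) = (u - v) - l • (A u - A v) := by
      rw [smul_sub]; abel
    have hsq : ‖(u - v) - l • (A u - A v)‖ ^ 2 ≤ ‖u - v‖ ^ 2 := by
      rw [norm_sub_sq_real]
      have h1 : ⟪u - v, l • (A u - A v)⟫ = l * ⟪A u - A v, u - v⟫ := by
        rw [real_inner_smul_right, real_inner_comm]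
      have h2 : ‖l • (A u - A v)‖ ^ 2 = l ^ 2 * ‖A u - A v‖ ^ 2 := by
        rw [norm_smul, Real.norm_eq_abs, mul_pow, sq_abs]
      rw [h1, h2]
      have h3 := hA u hu v hv
      nlinarith [mul_nonneg hl0 (by linarith : (0:ℝ) ≤ ⟪A u - A v, u - v⟫ - α * ‖A u - A v‖ ^ 2),
        mul_nonneg (mul_nonneg hl0 (by linarith : (0:ℝ) ≤ 2 * α - l)) (sq_nonneg ‖A u - A v‖)]
    rw [hre]
    exact (pow_le_pow_iff_left₀ (norm_nonneg _) (norm_nonneg _) two_ne_zero).mp hsq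
  -- memberships
  have hlam0 : ∀ n, (0:ℝ) ≤ lam n := fun n => le_trans ha.le (hlam n).1
  have hlam2 : ∀ n, lam n ≤ 2 * α := fun n => le_trans (hlam n).2 hb.le
  have halp0 : ∀ n, (0:ℝ) ≤ alp n := fun n => le_trans hc.le (halp n).1
  have halp1 : ∀ n, alp n ≤ 1 := fun n => le_trans (halp n).2 hd.le
  have hxC : ∀ n, x n ∈ C := by
    intro n
    induction n with
    | zero => exact hx0
    | succ k _ => rw [hx k]; exact hTmaps (hPC _).1
  have htC : ∀ n, t n ∈ C := fun n => by rw [ht n]; exact (hPC _).1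
  have hTtC : ∀ n, T (t n) ∈ C := fun n => hTmaps (htC n)
  have hyC : ∀ n, y n ∈ C := fun n => by
    rw [hy n]
    exact hCcv (hxC n) (hTtC n) (halp0 n) (by linarith [halp1 n]) (by ring)
  -- t n is close to p
  have ht_le : ∀ n, ‖t n - p‖ ≤ ‖x n - p‖ := by
    intro n
    calc ‖t n - p‖ = ‖PC (x n - lam n • A (x n)) - PC (p - lam n • A p)‖ := by
          rw [ht n, hpfix (lam n) (hlam0 n)]
      _ ≤ ‖(x n - lam n • A (x n)) - (p - lam n • A p)‖ := hPCne _ _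
      _ ≤ ‖x n - p‖ := hIA (lam n) (hlam0 n) (hlam2 n) (x n) (hxC n) p hpC
  have hTt_le : ∀ n, ‖T (t n) - p‖ ≤ ‖x n - p‖ := by
    intro n
    calc ‖T (t n) - p‖ = ‖T (t n) - T p‖ := by rw [hTp]
      _ ≤ ‖t n - p‖ := hT (t n) (htC n) p hpC
      _ ≤ ‖x n - p‖ := ht_le n
  -- main step inequality
  have key : ∀ n, ‖x (n + 1) - p‖ ^ 2
      ≤ ‖x n - p‖ ^ 2 - (alp n * (1 - alp n)) * ‖x n - T (t n)‖ ^ 2 := by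
    intro n
    have hstep : ‖x (n + 1) - p‖ ≤ ‖y n - p‖ := by
      calc ‖x (n + 1) - p‖ = ‖T (PC (y n - lam n • A (y n))) - T p‖ := by rw [hx n, hTp]
        _ ≤ ‖PC (y n - lam n • A (y n)) - p‖ := hT _ (hPC _).1 p hpC
        _ = ‖PC (y n - lam n • A (y n)) - PC (p - lam n • A p)‖ := by
            rw [hpfix (lam n) (hlam0 n)]
        _ ≤ ‖(y n - lam n • A (y n)) - (p - lam n • A p)‖ := hPCne _ _
        _ ≤ ‖y n - p‖ := hIA (lam n) (hlam0 n) (hlam2 n) (y n) (hyC n) p hpC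
    have hiden : ‖y n - p‖ ^ 2 = alp n * ‖x n - p‖ ^ 2 + (1 - alp n) * ‖T (t n) - p‖ ^ 2
        - alp n * (1 - alp n) * ‖x n - T (t n)‖ ^ 2 := by
      have hrw : y n - p = alp n • (x n - p) + (1 - alp n) • (T (t n) - p) := by
        rw [hy n, smul_sub, smul_sub]
        module
      have hsub : (x n - p) - (T (t n) - p) = x n - T (t n) := by abel
      rw [hrw, convex_norm_sq_identity, hsub]
    have hTtsq : ‖T (t n) - p‖ ^ 2 ≤ ‖x n - p‖ ^ 2 := by
      exact pow_le_pow_left₀ (norm_nonneg _) (hTt_le n) 2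
    have hstep2 : ‖x (n + 1) - p‖ ^ 2 ≤ ‖y n - p‖ ^ 2 :=
      pow_le_pow_left₀ (norm_nonneg _) hstep 2
    nlinarith [halp0 n, halp1 n]
  -- convergence of ‖x n - p‖²
  set s : ℕ → ℝ := fun n => ‖x n - p‖ ^ 2 with hs
  have hanti : Antitone s := by
    apply antitone_nat_of_succ_le
    intro n
    have := key n
    have h1 : 0 ≤ alp n * (1 - alp n) * ‖x n - T (t n)‖ ^ 2 :=
      mul_nonneg (mul_nonneg (halp0 n) (by linarith [halp1 n])) (sq_nonneg _)
    simp only [hs]; linarith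
  have hbdd : BddBelow (Set.range s) := ⟨0, fun _ ⟨n, hn⟩ => hn ▸ sq_nonneg _⟩
  have hL : Tendsto s atTop (𝓝 (⨅ n, s n)) := tendsto_atTop_ciInf hanti hbdd
  have hdiff : Tendsto (fun n => s n - s (n + 1)) atTop (𝓝 0) := by
    have h2 : Tendsto (fun n => s (n + 1)) atTop (𝓝 (⨅ n, s n)) :=
      hL.comp (tendsto_add_atTop_nat 1)
    simpa using hL.sub h2
  -- squeeze
  have hcd0 : 0 < c * (1 - d) := mul_pos hc (by linarith)
  have hsq0 : Tendsto (fun n => ‖x n - T (t n)‖ ^ 2) atTop (𝓝 0) := by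
    apply squeeze_zero (fun n => sq_nonneg _)
      (g := fun n => (c * (1 - d))⁻¹ * (s n - s (n + 1)))
    · intro n
      have hk := key n
      have hge : c * (1 - d) ≤ alp n * (1 - alp n) := by
        have h1 := (halp n).1
        have h2 := (halp n).2
        nlinarith
      have hq : 0 ≤ ‖x n - T (t n)‖ ^ 2 := sq_nonneg _
      have hmain : c * (1 - d) * ‖x n - T (t n)‖ ^ 2 ≤ s n - s (n + 1) := by
        have h5 : alp n * (1 - alp n) * ‖x n - T (t n)‖ ^ 2 ≤ s n - s (n + 1) := by
          simp only [hs]; linarith [key n]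
        linarith [mul_le_mul_of_nonneg_right hge hq]
      calc ‖x n - T (t n)‖ ^ 2
          = (c * (1 - d))⁻¹ * (c * (1 - d) * ‖x n - T (t n)‖ ^ 2) := by
            rw [← mul_assoc, inv_mul_cancel₀ hcd0.ne', one_mul]
        _ ≤ (c * (1 - d))⁻¹ * (s n - s (n + 1)) :=
            mul_le_mul_of_nonneg_left hmain (inv_nonneg.mpr hcd0.le)
    · simpa using hdiff.const_mul ((c * (1 - d))⁻¹)
  have htend1 : Tendsto (fun n => ‖x n - T (t n)‖) atTop (𝓝 0) := by
    have hc1 := (Real.continuous_sqrt.tendsto' 0 0 (by simp)).comp hsq0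
    have heq : (fun n => Real.sqrt (‖x n - T (t n)‖ ^ 2)) = fun n => ‖x n - T (t n)‖ :=
      funext fun n => Real.sqrt_sq (norm_nonneg _)
    rwa [show ((fun z => Real.sqrt z) ∘ fun n => ‖x n - T (t n)‖ ^ 2)
      = fun n => ‖x n - T (t n)‖ from heq] at hc1
  refine ⟨htend1, ?_⟩
  apply squeeze_zero (fun n => norm_nonneg _) (g := fun n => ‖x n - T (t n)‖) _ htend1
  intro n
  have hrw : x n - y n = (1 - alp n) • (x n - T (t n)) := by
    rw [hy n, smul_sub]; module
  rw [hrw, norm_smul, Real.norm_eq_abs, abs_of_nonneg (by linarith [halp1 n])]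
  have := halp0 n
  nlinarith [norm_nonneg (x n - T (t n))]
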